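/- Assume Φ(x) < ∞ for all x ∈ ℝ, Φ(x) → ∞ as x → ∞, and set Φμ = Φ(μ) (which lies in (0,∞)). Define the weight function h(x) = (2F₀(x) − 1) · exp(−Φ(x)/Φμ) / (4 Φμ² σ(x)² f₀(x)⁴) for x ≥ μ. Then for every continuous function g : ℝ → ℝ one has the identity (of Lebesgue integrals with values in [0,∞]): 4 ∫_{μ}^{∞} h(x) f₀(x)³ g(Φ(x))² dx = (1/Φμ) ∫_{1}^{∞} g(v·Φμ)² e^{−v} dv. -/

import Mathlib

open MeasureTheory Set Filter Topology ENNReal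

/-- One-dimensional change of variables for Lebesgue integrals. -/
lemma my_lintegral_image_eq {s : Set ℝ} {f f' : ℝ → ℝ} (hs : MeasurableSet s)
    (hf' : ∀ x ∈ s, HasDerivWithinAt f (f' x) s x) (hf : InjOn f s) (g : ℝ → ℝ≥0∞) :
    ∫⁻ x in f '' s, g x = ∫⁻ x in s, ENNReal.ofReal |f' x| * g (f x) := by
  simpa only [ContinuousLinearMap.det_toSpanSingleton] using
    MeasureTheory.lintegral_image_eq_lintegral_abs_det_fderiv_mul volume hs
      (fun x hx => (hf' x hx).hasFDerivWithinAt) hf g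

theorem stmt_0
    (σ f₀ : ℝ → ℝ)
    (hσc : Continuous σ) (hσpos : ∀ x, 0 < σ x)
    (hf₀c : Continuous f₀) (hf₀pos : ∀ x, 0 < f₀ x)
    (hf₀int : ∫ x, f₀ x = 1)
    (F₀ : ℝ → ℝ) (hF₀ : ∀ x, F₀ x = ∫ y in Iic x, f₀ y)
    (μ : ℝ) (hμ : F₀ μ = 1 / 2)
    (Φ : ℝ → ℝ≥0∞)
    (hΦ : ∀ x, Φ x = ∫⁻ y, ENNReal.ofReal
        (((Ioi x).indicator (fun _ => (1 : ℝ)) y - F₀ y) ^ 2 / (σ y ^ 2 * f₀ y)))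
    (hΦfin : ∀ x, Φ x < ⊤)
    (hΦtop : Tendsto Φ atTop (𝓝 ⊤))
    (Φμ : ℝ) (hΦμ : Φμ = (Φ μ).toReal) (hΦμpos : 0 < Φμ)
    (h : ℝ → ℝ)
    (hh : ∀ x, μ ≤ x →
      h x = (2 * F₀ x - 1) * Real.exp (-(Φ x).toReal / Φμ) /
        (4 * Φμ ^ 2 * σ x ^ 2 * f₀ x ^ 4))
    (g : ℝ → ℝ) (hg : Continuous g) :
    4 * ∫⁻ x in Ici μ,
        ENNReal.ofReal (h x * f₀ x ^ 3 * g ((Φ x).toReal) ^ 2)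
      = ENNReal.ofReal (1 / Φμ) *
        ∫⁻ v in Ici (1 : ℝ),
          ENNReal.ofReal (g (v * Φμ) ^ 2 * Real.exp (-v)) := by
  have hd : ∀ y, 0 < σ y ^ 2 * f₀ y := fun y =>
    mul_pos (pow_pos (hσpos y) 2) (hf₀pos y)
  set w : ℝ → ℝ := fun y => (2 * F₀ y - 1) / (σ y ^ 2 * f₀ y) with hwdef
  set φ : ℝ → ℝ := fun x => (Φ x).toReal with hφdef
  -- f₀ is integrable
  have hf₀int' : Integrable f₀ := by
    by_contra hcon
    rw [integral_undef hcon] at hf₀int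
    norm_num at hf₀int
  -- splitting of F₀
  have hsplit : ∀ a b : ℝ, a ≤ b → F₀ b = F₀ a + ∫ y in Ioc a b, f₀ y := by
    intro a b hab
    rw [hF₀, hF₀, ← setIntegral_union (Iic_disjoint_Ioc le_rfl) measurableSet_Ioc
      hf₀int'.integrableOn hf₀int'.integrableOn, Iic_union_Ioc_eq_Iic hab]
  -- F₀ is strictly monotone
  have hF₀mono : StrictMono F₀ := by
    intro a b hab
    have hpos : 0 < ∫ y in a..b, f₀ y :=
      intervalIntegral.intervalIntegral_pos_of_pos_on
        (hf₀c.intervalIntegrable a b) (fun y _ => hf₀pos y) hab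
    rw [intervalIntegral.integral_of_le hab.le] at hpos
    have := hsplit a b hab.le
    linarith
  -- F₀ is continuous
  have hF₀key : ∀ x, F₀ x = F₀ 0 + ∫ t in (0:ℝ)..x, f₀ t := by
    intro x
    rcases le_or_gt 0 x with hx | hx
    · rw [hsplit 0 x hx, intervalIntegral.integral_of_le hx]
    · have h1 := hsplit x 0 hx.le
      rw [intervalIntegral.integral_symm, intervalIntegral.integral_of_le hx.le]
      linarith
  have hF₀cont : Continuous F₀ := by
    have : Continuous fun x => F₀ 0 + ∫ t in (0:ℝ)..x, f₀ t :=
      continuous_const.add (intervalIntegral.continuous_primitive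
        (fun a b => hf₀c.intervalIntegrable a b) 0)
    exact this.congr fun x => (hF₀key x).symm
  have hF₀half : ∀ x, μ ≤ x → (1:ℝ)/2 ≤ F₀ x := fun x hx => by
    rw [← hμ]; exact hF₀mono.monotone hx
  have hwcont : Continuous w := by
    apply Continuous.div
    · exact (continuous_const.mul hF₀cont).sub continuous_const
    · exact (hσc.pow 2).mul hf₀c
    · exact fun y => (hd y).ne'
  have hwnonneg : ∀ x, μ ≤ x → 0 ≤ w x := fun x hx =>
    div_nonneg (by have := hF₀half x hx; linarith) (hd x).le
  have hwpos : ∀ x, μ < x → 0 < w x := fun x hx => by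
    apply div_pos _ (hd x)
    have := hF₀mono hx
    rw [hμ] at this
    linarith
  -- splitting of Φ
  have hΦsplit : ∀ x, μ ≤ x →
      Φ x = Φ μ + ∫⁻ y in Ioc μ x, ENNReal.ofReal (w y) := by
    intro x hx
    rw [hΦ x, hΦ μ, ← lintegral_indicator measurableSet_Ioc,
      ← lintegral_add_right _ ((hwcont.measurable.ennreal_ofReal).indicator measurableSet_Ioc)]
    congr 1
    funext y
    rcases le_or_gt y μ with h1 | h1
    · rw [indicator_of_notMem (s := Ioc μ x) (fun hy => absurd hy.1 (not_lt.2 h1)), add_zero,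
        indicator_of_notMem (s := Ioi x) (by simp only [mem_Ioi, not_lt]; linarith),
        indicator_of_notMem (s := Ioi μ) (by simp only [mem_Ioi, not_lt]; exact h1)]
    · rcases le_or_gt y x with h2 | h2
      · rw [indicator_of_mem (show y ∈ Ioc μ x from ⟨h1, h2⟩),
          indicator_of_notMem (s := Ioi x) (by simp only [mem_Ioi, not_lt]; exact h2),
          indicator_of_mem (show y ∈ Ioi μ from h1)]
        have hF : (1:ℝ)/2 ≤ F₀ y := hF₀half y h1.le
        rw [← ENNReal.ofReal_add (div_nonneg (sq_nonneg _) (hd y).le)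
          (div_nonneg (by linarith) (hd y).le)]
        congr 1
        rw [← add_div]
        congr 1
        ring
      · rw [indicator_of_notMem (s := Ioc μ x) (fun hy => absurd hy.2 (not_le.2 h2)), add_zero,
          indicator_of_mem (show y ∈ Ioi x from h2),
          indicator_of_mem (show y ∈ Ioi μ from h1)]
  -- real version
  have hφeq : ∀ x, μ ≤ x → φ x = Φμ + ∫ y in μ..x, w y := by
    intro x hx
    have hL : ∫⁻ y in Ioc μ x, ENNReal.ofReal (w y) ≠ ⊤ := by
      have hle : ∫⁻ y in Ioc μ x, ENNReal.ofReal (w y) ≤ Φ x := by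
        rw [hΦsplit x hx]; exact le_add_self
      exact (lt_of_le_of_lt hle (hΦfin x)).ne
    have hnn : 0 ≤ᵐ[volume.restrict (Ioc μ x)] w := by
      rw [EventuallyLE, ae_restrict_iff' measurableSet_Ioc]
      exact ae_of_all _ fun y hy => hwnonneg y hy.1.le
    have hint : ∫ y in Ioc μ x, w y
        = (∫⁻ y in Ioc μ x, ENNReal.ofReal (w y)).toReal :=
      integral_eq_lintegral_of_nonneg_ae hnn hwcont.aestronglyMeasurable.restrict
    rw [hφdef]
    simp only
    rw [hΦsplit x hx, ENNReal.toReal_add (hΦfin μ).ne hL, ← hΦμ,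
      intervalIntegral.integral_of_le hx, hint]
  -- φ has derivative w on Ici μ
  have hψd : ∀ x : ℝ, HasDerivAt (fun u => Φμ + ∫ y in μ..u, w y) (w x) x := by
    intro x
    exact (intervalIntegral.integral_hasDerivAt_right (hwcont.intervalIntegrable μ x)
      (hwcont.stronglyMeasurableAtFilter _ _) hwcont.continuousAt).const_add Φμ
  have hφderiv : ∀ x ∈ Ici μ, HasDerivWithinAt φ (w x) (Ici μ) x := by
    intro x hx
    exact ((hψd x).hasDerivWithinAt).congr (fun y hy => hφeq y hy) (hφeq x hx)
  -- φ strictly monotone on Ici μ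
  have hφmono : StrictMonoOn φ (Ici μ) := by
    intro a ha b hb hab
    have hadd : (∫ y in μ..a, w y) + ∫ y in a..b, w y = ∫ y in μ..b, w y :=
      intervalIntegral.integral_add_adjacent_intervals
        (hwcont.intervalIntegrable μ a) (hwcont.intervalIntegrable a b)
    have hpos : 0 < ∫ y in a..b, w y :=
      intervalIntegral.intervalIntegral_pos_of_pos_on (hwcont.intervalIntegrable a b)
        (fun y hy => hwpos y (lt_of_le_of_lt ha hy.1)) hab
    rw [hφeq a ha, hφeq b hb]
    linarith
  -- φ continuous on Ici μ
  have hφcont : ContinuousOn φ (Ici μ) := by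
    have hc : ContinuousOn (fun u => Φμ + ∫ y in μ..u, w y) (Ici μ) :=
      (continuous_const.add (intervalIntegral.continuous_primitive
        (fun a b => hwcont.intervalIntegrable a b) μ)).continuousOn
    exact hc.congr fun y hy => hφeq y hy
  -- φ tends to infinity
  have hφtop : Tendsto φ atTop atTop := by
    rw [tendsto_atTop]
    intro M
    filter_upwards [hΦtop.eventually (eventually_gt_nhds (ENNReal.ofReal_lt_top (r := M)))]
      with x hx
    exact (ENNReal.ofReal_le_iff_le_toReal (hΦfin x).ne).1 hx.le
  have hφμ : φ μ = Φμ := hΦμ.symm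
  -- the image
  have himage : φ '' Ici μ = Ici Φμ := by
    apply Subset.antisymm
    · rintro _ ⟨x, hx, rfl⟩
      rw [mem_Ici, ← hφμ]
      exact hφmono.monotoneOn (self_mem_Ici) hx hx
    · intro c hc
      obtain ⟨b, hb1, hb2⟩ :=
        ((hφtop.eventually (eventually_ge_atTop c)).and (eventually_ge_atTop μ)).exists
      have hmem : c ∈ φ '' Icc μ b := by
        apply intermediate_value_Icc hb2 (hφcont.mono Icc_subset_Ici_self)
        exact ⟨hφμ ▸ hc, hb1⟩
      exact image_mono (f := φ) Icc_subset_Ici_self hmem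
  -- change of variables
  set G : ℝ → ℝ≥0∞ := fun u =>
    ENNReal.ofReal (Real.exp (-u / Φμ) * g u ^ 2 / Φμ ^ 2) with hGdef
  have key1 : ∫⁻ u in Ici Φμ, G u = ∫⁻ x in Ici μ, ENNReal.ofReal |w x| * G (φ x) := by
    rw [← himage]
    exact my_lintegral_image_eq measurableSet_Ici hφderiv hφmono.injOn G
  have himg2 : (fun v : ℝ => v * Φμ) '' Ici 1 = Ici Φμ := by
    ext u
    simp only [mem_image, mem_Ici]
    constructor
    · rintro ⟨v, hv, rfl⟩
      nlinarith
    · intro hu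
      exact ⟨u / Φμ, (one_le_div hΦμpos).2 (by linarith), div_mul_cancel₀ u hΦμpos.ne'⟩
  have key2 : ∫⁻ u in Ici Φμ, G u
      = ∫⁻ v in Ici (1:ℝ), ENNReal.ofReal |Φμ| * G (v * Φμ) := by
    rw [← himg2]
    exact my_lintegral_image_eq measurableSet_Ici
      (fun x _ => (hasDerivAt_mul_const Φμ).hasDerivWithinAt)
      (fun a _ b _ hab => mul_right_cancel₀ hΦμpos.ne' hab) G
  -- identify the left-hand side
  have hLHS : 4 * ∫⁻ x in Ici μ,
      ENNReal.ofReal (h x * f₀ x ^ 3 * g ((Φ x).toReal) ^ 2)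
      = ∫⁻ x in Ici μ, ENNReal.ofReal |w x| * G (φ x) := by
    rw [← lintegral_const_mul' 4 _ (by simp)]
    apply setLIntegral_congr_fun measurableSet_Ici
    intro x hx
    have hwx : 0 ≤ w x := hwnonneg x hx
    beta_reduce
    rw [abs_of_nonneg hwx, hh x hx, hGdef]
    simp only
    rw [← ENNReal.ofReal_mul hwx,
      show (4:ℝ≥0∞) = ENNReal.ofReal 4 by norm_num, ← ENNReal.ofReal_mul (by norm_num)]
    congr 1
    rw [hwdef, hφdef]
    simp only
    have hσx := (hσpos x).ne'
    have hfx := (hf₀pos x).ne'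
    have hΦμne := hΦμpos.ne'
    field_simp
  -- identify the right-hand side
  have hRHS : ∫⁻ v in Ici (1:ℝ), ENNReal.ofReal |Φμ| * G (v * Φμ)
      = ENNReal.ofReal (1 / Φμ) *
        ∫⁻ v in Ici (1:ℝ), ENNReal.ofReal (g (v * Φμ) ^ 2 * Real.exp (-v)) := by
    rw [← lintegral_const_mul' (ENNReal.ofReal (1 / Φμ)) _ ENNReal.ofReal_ne_top]
    apply setLIntegral_congr_fun measurableSet_Ici
    intro v _
    rw [abs_of_nonneg hΦμpos.le, hGdef]
    simp only
    rw [show -(v * Φμ) / Φμ = -v by field_simp,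
      ← ENNReal.ofReal_mul hΦμpos.le, ← ENNReal.ofReal_mul (by positivity)]
    congr 1
    field_simp
  rw [hLHS, ← key1, key2, hRHS]
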